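/- For integers 1 ≤ i < k and n ≥ k + 1, the number of restricted growth sequences of length n with maximal letter k having exactly i fixed points is |{π ∈ R_{n,k} : F_π = i}| = i · Σ Π_{j=i}^{k} j^{m_j}, where the sum runs over all tuples (m_i, m_{i+1}, …, m_k) of nonnegative integers with m_i + m_{i+1} + ⋯ + m_k = n − k − 1. -/
import Mathlib


open Finset
open scoped Classical

/-- `π : Fin n → ℕ` is a restricted growth sequence (entries are positive, the first entry
is `1`, and each entry exceeds the maximum of the previous entries by at most `1`;
equivalently `π₁ = 1` and `π_{j+1} ≤ 1 + max {π₁, …, π_j}`). -/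
def IsRGS {n : ℕ} (π : Fin n → ℕ) : Prop :=
  ∀ i : Fin n, 1 ≤ π i ∧ π i ≤ (Finset.univ.filter (fun j : Fin n => j < i)).sup π + 1

/-- The (finite) set `R_n` of restricted growth sequences of length `n`
(all such sequences take values in `{1, …, n}`). -/
noncomputable def RGS (n : ℕ) : Finset (Fin n → ℕ) :=
  (Fintype.piFinset fun _ : Fin n => Finset.Icc 1 n).filter IsRGS

/-- The (finite) set `R_{n,k}` of restricted growth sequences of length `n`
with maximal letter `k`. -/
noncomputable def RGSk (n k : ℕ) : Finset (Fin n → ℕ) :=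
  (RGS n).filter (fun π => Finset.univ.sup π = k)

/-- `F_π`: the number of fixed points of `π`, i.e. (1-indexed) positions `i` with `π_i = i`. -/
def fixCount {n : ℕ} (π : Fin n → ℕ) : ℕ :=
  (Finset.univ.filter (fun i : Fin n => π i = (i : ℕ) + 1)).card

lemma filter_lt_eq_Iio {n : ℕ} (i : Fin n) :
    Finset.univ.filter (fun j => j < i) = Finset.Iio i := by ext j; simp

lemma isRGS_le {n : ℕ} {π : Fin n → ℕ} (hπ : IsRGS π) (j : Fin n) : π j ≤ (j : ℕ) + 1 := by
  have H : ∀ v : ℕ, ∀ j : Fin n, (j : ℕ) = v → π j ≤ (j : ℕ) + 1 := by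
    intro v
    induction v using Nat.strong_induction_on with
    | _ v ih =>
      intro j hj
      have h2 := (hπ j).2
      have hsup : (Finset.univ.filter (fun l => l < j)).sup π ≤ (j : ℕ) := by
        apply Finset.sup_le
        intro l hl
        simp only [Finset.mem_filter] at hl
        have hlj : (l : ℕ) < (j : ℕ) := hl.2
        have := ih (l : ℕ) (by omega) l rfl
        omega
      omega
  exact H _ j rfl

lemma sup_filter_lt_le {n : ℕ} {π : Fin n → ℕ} (hπ : IsRGS π) (j : Fin n) :
    (Finset.univ.filter (fun l => l < j)).sup π ≤ (j : ℕ) := by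
  apply Finset.sup_le
  intro l hl
  simp only [Finset.mem_filter] at hl
  have hlj : (l : ℕ) < (j : ℕ) := hl.2
  have := isRGS_le hπ l
  omega

lemma sup_filter_lt_castSucc {n : ℕ} (π : Fin (n+1) → ℕ) (i : Fin n) :
    (Finset.univ.filter (fun j => j < i.castSucc)).sup π
      = (Finset.univ.filter (fun j => j < i)).sup (π ∘ Fin.castSucc) := by
  rw [filter_lt_eq_Iio, filter_lt_eq_Iio, Fin.Iio_castSucc, Finset.sup_map]
  rfl

lemma sup_filter_lt_last {n : ℕ} (π : Fin (n+1) → ℕ) :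
    (Finset.univ.filter (fun j => j < Fin.last n)).sup π
      = Finset.univ.sup (π ∘ Fin.castSucc) := by
  rw [filter_lt_eq_Iio, Fin.Iio_last_eq_map, Finset.sup_map]
  rfl

lemma sup_univ_succ {n : ℕ} (π : Fin (n+1) → ℕ) :
    Finset.univ.sup π = max (Finset.univ.sup (π ∘ Fin.castSucc)) (π (Fin.last n)) := by
  conv_lhs => rw [Fin.univ_castSuccEmb]
  rw [Finset.sup_cons, Finset.sup_map]
  rw [max_comm]
  rfl

lemma snoc_comp_castSucc {n : ℕ} (σ : Fin n → ℕ) (c : ℕ) :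
    (Fin.snoc σ c : Fin (n+1) → ℕ) ∘ Fin.castSucc = σ :=
  funext fun i => Fin.snoc_castSucc _ _ _

lemma sup_univ_snoc {n : ℕ} (σ : Fin n → ℕ) (c : ℕ) :
    Finset.univ.sup (Fin.snoc σ c : Fin (n+1) → ℕ) = max (Finset.univ.sup σ) c := by
  rw [sup_univ_succ, snoc_comp_castSucc, Fin.snoc_last]

lemma isRGS_snoc_iff {n : ℕ} (σ : Fin n → ℕ) (c : ℕ) :
    IsRGS (Fin.snoc σ c : Fin (n+1) → ℕ)
      ↔ IsRGS σ ∧ 1 ≤ c ∧ c ≤ Finset.univ.sup σ + 1 := by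
  constructor
  · intro h
    refine ⟨fun i => ?_, ?_, ?_⟩
    · have hi := h i.castSucc
      rw [Fin.snoc_castSucc, sup_filter_lt_castSucc, snoc_comp_castSucc] at hi
      exact hi
    · have hl := h (Fin.last n)
      rw [Fin.snoc_last] at hl
      exact hl.1
    · have hl := h (Fin.last n)
      rw [Fin.snoc_last, sup_filter_lt_last, snoc_comp_castSucc] at hl
      exact hl.2
  · rintro ⟨hσ, hc1, hc2⟩ i
    refine Fin.lastCases ?_ ?_ i
    · rw [Fin.snoc_last, sup_filter_lt_last, snoc_comp_castSucc]
      exact ⟨hc1, hc2⟩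
    · intro j
      rw [Fin.snoc_castSucc, sup_filter_lt_castSucc, snoc_comp_castSucc]
      exact hσ j

lemma fixCount_snoc {n : ℕ} (σ : Fin n → ℕ) (c : ℕ) :
    fixCount (Fin.snoc σ c : Fin (n+1) → ℕ)
      = fixCount σ + (if c = n + 1 then 1 else 0) := by
  unfold fixCount
  rw [Finset.card_filter, Finset.card_filter, Fin.sum_univ_castSucc]
  congr 1
  · apply Finset.sum_congr rfl
    intro i _
    rw [Fin.snoc_castSucc]
    simp
  · rw [Fin.snoc_last]
    simp

lemma mem_RGS_iff {n : ℕ} (π : Fin n → ℕ) : π ∈ RGS n ↔ IsRGS π := by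
  unfold RGS
  rw [Finset.mem_filter]
  constructor
  · exact And.right
  · intro h
    refine ⟨?_, h⟩
    rw [Fintype.mem_piFinset]
    intro j
    rw [Finset.mem_Icc]
    have h1 := (h j).1
    have h2 := isRGS_le h j
    have h3 : (j : ℕ) < n := j.isLt
    omega

lemma mem_RGSk_iff {n k : ℕ} (π : Fin n → ℕ) :
    π ∈ RGSk n k ↔ IsRGS π ∧ Finset.univ.sup π = k := by
  unfold RGSk
  rw [Finset.mem_filter, mem_RGS_iff]

lemma fix_lower {n : ℕ} {π : Fin n → ℕ} (hπ : IsRGS π) :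
    ∀ v : ℕ, ∀ j : Fin n, (j : ℕ) = v → π j = (j : ℕ) + 1 →
      ∀ l : Fin n, l ≤ j → π l = (l : ℕ) + 1 := by
  intro v
  induction v using Nat.strong_induction_on with
  | _ v ih =>
    intro j hjv hj l hl
    rcases eq_or_lt_of_le hl with rfl | hlt
    · exact hj
    · have hge : (j : ℕ) ≤ (Finset.univ.filter (fun x => x < j)).sup π := by
        have h2 := (hπ j).2
        omega
      have hne : (Finset.univ.filter (fun x => x < j)).Nonempty := ⟨l, by simp [hlt]⟩
      obtain ⟨p, hp, hpe⟩ := Finset.exists_mem_eq_sup _ hne π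
      simp only [Finset.mem_filter] at hp
      have hpj : (p : ℕ) < (j : ℕ) := hp.2
      have hple := isRGS_le hπ p
      have hpfix : π p = (p : ℕ) + 1 := by omega
      have hpv : (p : ℕ) + 1 = (j : ℕ) := by omega
      have hlp : l ≤ p := by
        have : (l : ℕ) < (j : ℕ) := hlt
        exact Fin.le_def.mpr (by omega)
      exact ih (p : ℕ) (by omega) p rfl hpfix l hlp


lemma step_card (n k i : ℕ) (hk : 1 ≤ k) (hkn : k ≤ n) :
    ((RGSk (n+1) k).filter (fun π => fixCount π = i)).card
      = k * ((RGSk n k).filter (fun π => fixCount π = i)).card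
        + ((RGSk n (k-1)).filter (fun π => fixCount π = i)).card := by
  classical
  set S1 := ((RGSk n k).filter (fun π => fixCount π = i)) ×ˢ Finset.Icc 1 k with hS1
  set S2 := ((RGSk n (k-1)).filter (fun π => fixCount π = i)) ×ˢ ({k} : Finset ℕ) with hS2
  have hinj : Function.Injective
      (fun p : (Fin n → ℕ) × ℕ => (Fin.snoc p.1 p.2 : Fin (n+1) → ℕ)) := by
    intro p q h
    have h1 : p.1 = q.1 := by
      funext t
      have ht := congrFun h t.castSucc
      simpa using ht
    have h2 : p.2 = q.2 := by
      have ht := congrFun h (Fin.last n)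
      simpa using ht
    exact Prod.ext h1 h2
  have hdisj : Disjoint S1 S2 := by
    rw [Finset.disjoint_left]
    rintro ⟨σ, c⟩ h1 h2
    rw [hS1, Finset.mem_product, Finset.mem_filter, mem_RGSk_iff] at h1
    rw [hS2, Finset.mem_product, Finset.mem_filter, mem_RGSk_iff] at h2
    have e1 := h1.1.1.2
    have e2 := h2.1.1.2
    omega
  have himg : ((RGSk (n+1) k).filter (fun π => fixCount π = i))
      = (S1 ∪ S2).image (fun p => (Fin.snoc p.1 p.2 : Fin (n+1) → ℕ)) := by
    ext π
    simp only [Finset.mem_image, Finset.mem_union, Finset.mem_filter, mem_RGSk_iff, hS1, hS2,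
      Finset.mem_product, Finset.mem_Icc, Finset.mem_singleton]
    constructor
    · rintro ⟨⟨hrgs, hsup⟩, hfix⟩
      refine ⟨(Fin.init π, π (Fin.last n)), ?_, Fin.snoc_init_self π⟩
      have hπ : π = Fin.snoc (Fin.init π) (π (Fin.last n)) := (Fin.snoc_init_self π).symm
      rw [hπ, isRGS_snoc_iff] at hrgs
      rw [hπ, sup_univ_snoc] at hsup
      rw [hπ, fixCount_snoc] at hfix
      obtain ⟨hσ, hc1, hc2⟩ := hrgs
      have hcle : π (Fin.last n) ≤ k := by omega
      have hcn : ¬ π (Fin.last n) = n + 1 := by omega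
      rw [if_neg hcn, add_zero] at hfix
      by_cases hs : Finset.univ.sup (Fin.init π) = k
      · exact Or.inl ⟨⟨⟨hσ, hs⟩, hfix⟩, hc1, hcle⟩
      · refine Or.inr ⟨⟨⟨hσ, ?_⟩, hfix⟩, ?_⟩
        · show Finset.univ.sup (Fin.init π) = k - 1
          omega
        · show π (Fin.last n) = k
          omega
    · rintro ⟨⟨σ, c⟩, hmem, rfl⟩
      rcases hmem with ⟨⟨⟨hσ, hs⟩, hfix⟩, hc1, hc2⟩ | ⟨⟨⟨hσ, hs⟩, hfix⟩, hc⟩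
      · refine ⟨⟨?_, ?_⟩, ?_⟩
        · rw [isRGS_snoc_iff]
          exact ⟨hσ, hc1, by omega⟩
        · rw [sup_univ_snoc]
          omega
        · rw [fixCount_snoc, if_neg (by omega), add_zero]
          exact hfix
      · refine ⟨⟨?_, ?_⟩, ?_⟩
        · rw [isRGS_snoc_iff]
          exact ⟨hσ, by omega, by omega⟩
        · rw [sup_univ_snoc]
          omega
        · rw [fixCount_snoc, if_neg (by omega), add_zero]
          exact hfix
  rw [himg, Finset.card_image_of_injective _ hinj, Finset.card_union_of_disjoint hdisj,
    hS1, hS2, Finset.card_product, Finset.card_product, Finset.card_singleton,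
    Nat.card_Icc, Nat.add_sub_cancel]
  ring

lemma low_empty (m j i : ℕ) (hj : j < i) :
    ((RGSk m j).filter (fun π => fixCount π = i)) = ∅ := by
  rw [Finset.eq_empty_iff_forall_notMem]
  intro π hmem
  rw [Finset.mem_filter, mem_RGSk_iff] at hmem
  obtain ⟨⟨hrgs, hsup⟩, hfix⟩ := hmem
  have hne : (Finset.univ.filter (fun l : Fin m => π l = (l : ℕ) + 1)).Nonempty := by
    rw [← Finset.card_pos,
      (show (Finset.univ.filter (fun l : Fin m => π l = (l : ℕ) + 1)).card = i from hfix)]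
    omega
  set F := Finset.univ.filter (fun l : Fin m => π l = (l : ℕ) + 1) with hF
  set p := F.max' hne with hp
  have hpF : p ∈ F := F.max'_mem hne
  have hsub : F ⊆ Finset.Iic p := fun x hx => Finset.mem_Iic.mpr (F.le_max' x hx)
  have hcard : F.card ≤ (p : ℕ) + 1 := by
    have := Finset.card_le_card hsub
    rwa [Fin.card_Iic] at this
  have hpfix : π p = (p : ℕ) + 1 := by
    rw [hF] at hpF
    simp only [Finset.mem_filter] at hpF
    exact hpF.2
  have hple : π p ≤ j := hsup ▸ Finset.le_sup (Finset.mem_univ p)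
  have : F.card = i := hfix
  omega

lemma id_isRGS (m : ℕ) : IsRGS (fun j : Fin m => (j : ℕ) + 1) := by
  intro i
  refine ⟨by dsimp only; omega, ?_⟩
  rcases Nat.eq_zero_or_pos (i : ℕ) with h0 | hpos
  · simp [h0]
  · have hmem : (⟨(i : ℕ) - 1, by omega⟩ : Fin m)
        ∈ Finset.univ.filter (fun j => j < i) := by
      simp only [Finset.mem_filter, Finset.mem_univ, true_and, Fin.lt_def]
      omega
    have hle : ((i : ℕ) - 1) + 1 ≤ (Finset.univ.filter (fun j => j < i)).sup
        (fun j : Fin m => (j : ℕ) + 1) := by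
      simpa using Finset.le_sup (f := fun j : Fin m => (j : ℕ) + 1) hmem
    dsimp only
    omega

lemma id_sup (m : ℕ) : Finset.univ.sup (fun j : Fin m => (j : ℕ) + 1) = m := by
  rcases Nat.eq_zero_or_pos m with rfl | hm
  · simp
  · apply le_antisymm
    · apply Finset.sup_le
      intro j _
      omega
    · have hmem : (⟨m - 1, by omega⟩ : Fin m) ∈ (Finset.univ : Finset (Fin m)) :=
        Finset.mem_univ _
      have hle := Finset.le_sup (f := fun j : Fin m => (j : ℕ) + 1) hmem
      simp only at hle
      omega

lemma id_fixCount (m : ℕ) : fixCount (fun j : Fin m => (j : ℕ) + 1) = m := by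
  unfold fixCount
  rw [Finset.filter_true_of_mem (fun x _ => rfl), Finset.card_univ]
  simp

lemma diag_forced {m : ℕ} {π : Fin m → ℕ} (hrgs : IsRGS π)
    (hsup : Finset.univ.sup π = m) : π = fun j : Fin m => (j : ℕ) + 1 := by
  rcases Nat.eq_zero_or_pos m with rfl | hm
  · funext j
    exact j.elim0
  · have hu : (Finset.univ : Finset (Fin m)).Nonempty := ⟨⟨0, hm⟩, Finset.mem_univ _⟩
    obtain ⟨p, _, hpe⟩ := Finset.exists_mem_eq_sup (Finset.univ : Finset (Fin m)) hu π
    have hpm : π p = m := by rw [← hsup, hpe]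
    have hple := isRGS_le hrgs p
    have hpv : (p : ℕ) = m - 1 := by
      have := p.isLt
      omega
    have hpfix : π p = (p : ℕ) + 1 := by omega
    funext l
    exact fix_lower hrgs (p : ℕ) p rfl hpfix l (Fin.le_def.mpr (by have := l.isLt; omega))

lemma diag_empty (m i : ℕ) (him : i ≠ m) :
    ((RGSk m m).filter (fun π => fixCount π = i)) = ∅ := by
  rw [Finset.eq_empty_iff_forall_notMem]
  intro π hmem
  rw [Finset.mem_filter, mem_RGSk_iff] at hmem
  obtain ⟨⟨hrgs, hsup⟩, hfix⟩ := hmem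
  rw [diag_forced hrgs hsup, id_fixCount] at hfix
  exact him hfix.symm

lemma diag_card_one (i : ℕ) :
    ((RGSk i i).filter (fun π => fixCount π = i)).card = 1 := by
  rw [Finset.card_eq_one]
  refine ⟨fun j : Fin i => (j : ℕ) + 1, ?_⟩
  ext π
  rw [Finset.mem_filter, mem_RGSk_iff, Finset.mem_singleton]
  constructor
  · rintro ⟨⟨hrgs, hsup⟩, _⟩
    exact diag_forced hrgs hsup
  · rintro rfl
    exact ⟨⟨id_isRGS i, id_sup i⟩, id_fixCount i⟩

def Hsum {s : ℕ} (f : Fin s → ℕ) (M : ℕ) : ℕ :=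
  ∑ m ∈ Finset.Nat.antidiagonalTuple s M, ∏ t : Fin s, (f t) ^ (m t)

lemma Hsum_perm {s : ℕ} (f : Fin s → ℕ) (σ : Equiv.Perm (Fin s)) (M : ℕ) :
    Hsum (f ∘ σ) M = Hsum f M := by
  unfold Hsum
  refine Finset.sum_nbij' (fun m => m ∘ σ.symm) (fun m => m ∘ σ) ?_ ?_ ?_ ?_ ?_
  · intro m hm
    rw [Finset.Nat.mem_antidiagonalTuple] at *
    rw [← hm]; exact Equiv.sum_comp σ.symm m
  · intro m hm
    rw [Finset.Nat.mem_antidiagonalTuple] at *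
    rw [← hm]; exact Equiv.sum_comp σ m
  · intro m _; funext t; simp
  · intro m _; funext t; simp
  · intro m _
    rw [← Equiv.prod_comp σ (fun t => f t ^ (m ∘ σ.symm) t)]
    simp

lemma Hsum_aux1 {d : ℕ} (g : Fin (d+1) → ℕ) (N : ℕ) :
    ∑ m ∈ (Finset.Nat.antidiagonalTuple (d+1) (N+1)).filter (fun m => m 0 = 0),
      ∏ t : Fin (d+1), g t ^ m t = Hsum (g ∘ Fin.succ) (N+1) := by
  unfold Hsum
  refine Finset.sum_nbij' (fun m => Fin.tail m) (fun m => Fin.cons 0 m) ?_ ?_ ?_ ?_ ?_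
  · intro m hm
    simp only [Finset.mem_filter, Finset.Nat.mem_antidiagonalTuple] at hm ⊢
    rw [Fin.sum_univ_succ] at hm
    have ht : ∑ i : Fin d, Fin.tail m i = ∑ i : Fin d, m i.succ := rfl
    omega
  · intro m hm
    simp only [Finset.mem_filter, Finset.Nat.mem_antidiagonalTuple] at hm ⊢
    rw [Fin.sum_univ_succ]
    simp [Fin.tail, hm]
  · intro m hm
    simp only [Finset.mem_filter] at hm
    funext t
    refine Fin.cases ?_ ?_ t
    · simp [hm.2]
    · intro t'; simp [Fin.tail]
  · intro m _; exact Fin.tail_cons _ _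
  · intro m hm
    simp only [Finset.mem_filter] at hm
    rw [Fin.prod_univ_succ, hm.2]
    simp [Fin.tail]

lemma Hsum_aux2 {d : ℕ} (g : Fin (d+1) → ℕ) (N : ℕ) :
    ∑ m ∈ (Finset.Nat.antidiagonalTuple (d+1) (N+1)).filter (fun m => ¬ m 0 = 0),
      ∏ t : Fin (d+1), g t ^ m t = g 0 * Hsum g N := by
  unfold Hsum
  rw [Finset.mul_sum]
  refine Finset.sum_nbij' (fun m => Fin.cons (m 0 - 1) (Fin.tail m))
    (fun m => Fin.cons (m 0 + 1) (Fin.tail m)) ?_ ?_ ?_ ?_ ?_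
  · intro m hm
    simp only [Finset.mem_filter, Finset.Nat.mem_antidiagonalTuple] at hm ⊢
    rw [Fin.sum_univ_succ] at hm ⊢
    simp only [Fin.cons_zero, Fin.cons_succ]
    have ht : ∑ i : Fin d, Fin.tail m i = ∑ i : Fin d, m i.succ := rfl
    omega
  · intro m hm
    simp only [Finset.mem_filter, Finset.Nat.mem_antidiagonalTuple] at hm ⊢
    rw [Fin.sum_univ_succ] at hm ⊢
    simp only [Fin.cons_zero, Fin.cons_succ]
    have ht : ∑ i : Fin d, Fin.tail m i = ∑ i : Fin d, m i.succ := rfl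
    refine ⟨by omega, by simp⟩
  · intro m hm
    simp only [Finset.mem_filter] at hm
    funext t
    refine Fin.cases ?_ ?_ t
    · simp only [Fin.cons_zero]
      omega
    · intro t'
      simp only [Fin.cons_succ, Fin.tail_cons]
      rfl
  · intro m _
    funext t
    refine Fin.cases ?_ ?_ t
    · simp only [Fin.cons_zero]
      omega
    · intro t'
      simp only [Fin.cons_succ, Fin.tail_cons]
      rfl
  · intro m hm
    simp only [Finset.mem_filter] at hm
    rw [Fin.prod_univ_succ, Fin.prod_univ_succ]
    simp only [Fin.cons_zero, Fin.cons_succ]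
    have ht : ∏ x : Fin d, g x.succ ^ Fin.tail m x = ∏ x : Fin d, g x.succ ^ m x.succ := rfl
    rw [ht]
    obtain ⟨a, ha⟩ : ∃ a, m 0 = a + 1 := ⟨m 0 - 1, by omega⟩
    rw [ha, Nat.add_sub_cancel, pow_succ]
    ring

lemma Hsum_cons_split {d : ℕ} (g : Fin (d+1) → ℕ) (N : ℕ) :
    Hsum g (N+1) = g 0 * Hsum g N + Hsum (g ∘ Fin.succ) (N+1) := by
  classical
  rw [← Hsum_aux1 g N, ← Hsum_aux2 g N]
  have h := Finset.sum_filter_add_sum_filter_not (Finset.Nat.antidiagonalTuple (d+1) (N+1))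
    (fun m => m 0 = 0) (fun m => ∏ t : Fin (d+1), g t ^ m t)
  unfold Hsum
  rw [← h]
  exact add_comm _ _

lemma Hsum_rev {s : ℕ} (f : Fin s → ℕ) (M : ℕ) :
    Hsum (f ∘ Fin.rev) M = Hsum f M := Hsum_perm f Fin.revPerm M

lemma Hsum_snoc_split {d : ℕ} (f : Fin (d+1) → ℕ) (N : ℕ) :
    Hsum f (N+1) = f (Fin.last d) * Hsum f N + Hsum (f ∘ Fin.castSucc) (N+1) := by
  have h := Hsum_cons_split (f ∘ Fin.rev) N
  rw [Hsum_rev, Hsum_rev] at h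
  have e1 : (f ∘ Fin.rev) 0 = f (Fin.last d) := by
    simp [Fin.rev_zero]
  have e2 : Hsum ((f ∘ Fin.rev) ∘ Fin.succ) (N+1) = Hsum (f ∘ Fin.castSucc) (N+1) := by
    have : (f ∘ Fin.rev) ∘ Fin.succ = (f ∘ Fin.castSucc) ∘ Fin.rev := by
      funext t
      simp [Function.comp, Fin.rev_succ]
    rw [this, Hsum_rev]
  rw [e1, e2] at h
  exact h

lemma Hsum_zero {s : ℕ} (f : Fin s → ℕ) : Hsum f 0 = 1 := by
  unfold Hsum
  rw [Finset.Nat.antidiagonalTuple_zero_right]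
  simp

lemma Hsum_one_var (f : Fin 1 → ℕ) (M : ℕ) : Hsum f M = f 0 ^ M := by
  unfold Hsum
  rw [Finset.Nat.antidiagonalTuple_one]
  simp

lemma Hsum_shape (s1 s2 i M : ℕ) (h : s1 = s2) :
    Hsum (fun t : Fin s1 => i + (t : ℕ)) M = Hsum (fun t : Fin s2 => i + (t : ℕ)) M := by
  subst h; rfl

lemma A_pow (i : ℕ) (hi : 1 ≤ i) : ∀ d : ℕ,
    ((RGSk (i+d) i).filter (fun π => fixCount π = i)).card = i ^ d := by
  intro d
  induction d with
  | zero => simpa using diag_card_one i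
  | succ d ihd =>
    have hs := step_card (i+d) i i hi (by omega)
    rw [low_empty (i+d) (i-1) i (by omega)] at hs
    simp only [Finset.card_empty, add_zero] at hs
    rw [show i + (d+1) = (i+d)+1 from rfl, hs, ihd, pow_succ]
    ring

lemma base_card : ∀ k i : ℕ, 1 ≤ i → i < k →
    ((RGSk (k+1) k).filter (fun π => fixCount π = i)).card = i := by
  intro k
  induction k with
  | zero => intro i h1 h2; omega
  | succ k ihk =>
    intro i h1 h2
    have hs := step_card (k+1) (k+1) i (by omega) (by omega)
    rw [diag_empty (k+1) i (by omega)] at hs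
    simp only [Finset.card_empty, Nat.mul_zero, zero_add, Nat.add_sub_cancel] at hs
    rw [hs]
    rcases Nat.lt_or_ge i k with hik | hik
    · exact ihk i h1 hik
    · have hie : i = k := by omega
      subst hie
      have hp := A_pow i h1 1
      rw [pow_one] at hp
      simpa using hp

lemma main_aux : ∀ n i s : ℕ, 1 ≤ i → i + s + 2 ≤ n →
    ((RGSk n (i+s+1)).filter (fun π => fixCount π = i)).card
      = i * Hsum (fun t : Fin (s+2) => i + (t : ℕ)) (n - (i+s+1) - 1) := by
  intro n
  induction n with
  | zero => intro i s h1 h2; omega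
  | succ m ih =>
    intro i s h1 h2
    rcases Nat.lt_or_ge m (i+s+2) with hbase | hstep
    · obtain rfl : m = i + s + 1 := by omega
      rw [show i+s+1+1 - (i+s+1) - 1 = 0 from by omega, Hsum_zero, Nat.mul_one]
      exact base_card (i+s+1) i h1 (by omega)
    · have hs := step_card m (i+s+1) i (by omega) (by omega)
      rw [show i+s+1-1 = i+s from by omega] at hs
      have hX : ((RGSk m (i+s)).filter (fun π => fixCount π = i)).card
          = i * Hsum (fun t : Fin (s+1) => i + (t : ℕ)) (m - (i+s) - 1) := by
        rcases s with _ | s'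
        · simp only [Nat.add_zero]
          have h4 : m = i + (m - i) := by omega
          conv_lhs => rw [h4]
          rw [A_pow i h1 (m-i), Hsum_one_var]
          simp only [Fin.val_zero, Nat.add_zero]
          conv_lhs => rw [show m - i = (m - i - 1) + 1 from by omega]
          rw [pow_succ]
          ring
        · rw [show i + (s'+1) = i + s' + 1 from by omega, ih i s' h1 (by omega)]
      rw [hs, hX, ih i s h1 hstep]
      rw [show m+1 - (i+s+1) - 1 = (m - (i+s+1) - 1) + 1 from by omega]
      have hsplit := Hsum_snoc_split (fun t : Fin (s+2) => i + (t : ℕ)) (m - (i+s+1) - 1)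
      have hcast : ((fun t : Fin (s+2) => i + (t : ℕ)) ∘ Fin.castSucc)
          = fun t : Fin (s+1) => i + (t : ℕ) := by
        funext t
        simp [Function.comp]
      rw [hcast] at hsplit
      rw [Fin.val_last] at hsplit
      rw [hsplit]
      rw [show m - (i+s) - 1 = (m - (i+s+1) - 1) + 1 from by omega]
      ring


/-- For `1 ≤ i < k` and `n ≥ k + 1`, the number of RGS of length `n` with
maximal letter `k` and exactly `i` fixed points equals
`i · Σ Π_{j=i}^{k} j^{m_j}`, summed over tuples `(m_i, …, m_k)` of nonnegative integers with
`m_i + ⋯ + m_k = n - k - 1`. -/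
theorem rgs_count_i_fixed_points (i k n : ℕ) (hi : 1 ≤ i) (hik : i < k) (hn : k + 1 ≤ n) :
    ((RGSk n k).filter (fun π => fixCount π = i)).card
      = i * ∑ m ∈ Finset.Nat.antidiagonalTuple (k - i + 1) (n - k - 1),
          ∏ t : Fin (k - i + 1), (i + (t : ℕ)) ^ (m t) := by
  obtain ⟨s, rfl⟩ : ∃ s, k = i + s + 1 := ⟨k - i - 1, by omega⟩
  have h := main_aux n i s hi (by omega)
  show _ = i * Hsum (fun t : Fin (i+s+1-i+1) => i + (t : ℕ)) (n - (i+s+1) - 1)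
  rw [Hsum_shape (i+s+1-i+1) (s+2) i _ (by omega)]
  exact h
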